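/- Let (c_j) be a summable sequence of nonnegative real numbers, and let n ≥ 1, d = n + l with 0 ≤ l ≤ n − 1. Then Σ_{j=d+1}^∞ c_j + Σ_{j=1}^∞ Σ_{i=2jn−d}^{2jn+d} c_i ≤ 3 Σ_{i=n−l}^∞ c_i. -/

import Mathlib

open Finset

private lemma sum_le_tsum_shift (c : ℕ → ℝ) (h0 : ∀ j, 0 ≤ c j) (hc : Summable c) (m : ℕ)
    (F : Finset ℕ) (hF : ∀ i ∈ F, m ≤ i) : ∑ i ∈ F, c i ≤ ∑' j, c (m + j) := by
  have hg : Summable (fun j => c (m + j)) := by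
    simpa [add_comm] using (summable_nat_add_iff m).2 hc
  have h : ∑ j ∈ F.image (· - m), c (m + j) = ∑ i ∈ F, c i := by
    rw [Finset.sum_image]
    · exact Finset.sum_congr rfl fun i hi => by have := hF i hi; congr 1; omega
    · intro a ha b hb hab
      have := hF a ha; have := hF b hb
      simp only at hab; omega
  rw [← h]
  exact Summable.sum_le_tsum _ (fun i _ => h0 _) hg

/-- Series estimate for `d = n + l`, `0 ≤ l ≤ n - 1`:
`Σ_{j=d+1}^∞ c_j + Σ_{j=1}^∞ Σ_{i=2jn-d}^{2jn+d} c_i ≤ 3 Σ_{i=n-l}^∞ c_i`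
for nonnegative summable `(c_j)`. -/
theorem aliasing_tail_bound_plus (c : ℕ → ℝ) (hc0 : ∀ j, 0 ≤ c j) (hc : Summable c)
    (n l : ℕ) (hn : 1 ≤ n) (hl : l ≤ n - 1) :
    (∑' j : ℕ, c (n + l + 1 + j)) +
        ∑' j : ℕ, ∑ i ∈ Finset.Icc (2 * (j + 1) * n - (n + l)) (2 * (j + 1) * n + (n + l)), c i ≤
      3 * ∑' j : ℕ, c (n - l + j) := by
  set m := n - l with hm
  set S := ∑' j : ℕ, c (m + j) with hS
  have hln : l + 1 ≤ n := by omega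
  have hg : Summable (fun j => c (m + j)) := by
    simpa [add_comm] using (summable_nat_add_iff m).2 hc
  -- Part 1
  have h1 : (∑' j : ℕ, c (n + l + 1 + j)) ≤ S := by
    have key := Summable.sum_add_tsum_nat_add (f := fun j => c (m + j)) (2 * l + 1) hg
    have e : (∑' j : ℕ, c (n + l + 1 + j)) = ∑' i : ℕ, c (m + (i + (2 * l + 1))) := by
      apply tsum_congr; intro i; congr 1; omega
    have hnn : 0 ≤ ∑ i ∈ range (2 * l + 1), c (m + i) :=
      Finset.sum_nonneg fun i _ => hc0 _
    rw [e]
    linarith [key]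
  -- Part 2
  set lo : ℕ → ℕ := fun j => 2 * j * n + (n - l) with hlo
  set mid : ℕ → ℕ := fun j => 2 * j * n + 2 * n + 1 with hmid
  set hi : ℕ → ℕ := fun j => 2 * j * n + 3 * n + l + 1 with hhi
  have hsplit : ∀ j : ℕ,
      ∑ i ∈ Finset.Icc (2 * (j + 1) * n - (n + l)) (2 * (j + 1) * n + (n + l)), c i
        = (∑ i ∈ Ico (lo j) (mid j), c i) + ∑ i ∈ Ico (mid j) (hi j), c i := by
    intro j
    have er : 2 * (j + 1) * n = 2 * j * n + 2 * n := by ring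
    have e1 : 2 * (j + 1) * n - (n + l) = lo j := by simp only [hlo]; omega
    have e2 : 2 * (j + 1) * n + (n + l) + 1 = hi j := by simp only [hhi]; omega
    rw [← Finset.Ico_add_one_right_eq_Icc, e1, e2]
    exact (Finset.sum_Ico_consecutive c (by simp only [hlo, hmid]; omega)
      (by simp only [hmid, hhi]; omega)).symm
  have hmono : ∀ j k : ℕ, j < k → 2 * j * n + 2 * n ≤ 2 * k * n := by
    intro j k hjk
    calc 2 * j * n + 2 * n = 2 * (j + 1) * n := by ring
    _ ≤ 2 * k * n := Nat.mul_le_mul_right n (by omega)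
  have hdA : ∀ N : ℕ, Set.PairwiseDisjoint ↑(range N) (fun j => Ico (lo j) (mid j)) := by
    intro N j _ k _ hjk
    apply Finset.disjoint_left.2
    intro i hiA hiB
    simp only [Finset.mem_Ico, hlo, hmid] at hiA hiB
    rcases Nat.lt_or_ge j k with h | h
    · have := hmono j k h; omega
    · have hkj : k < j := by omega
      have := hmono k j hkj; omega
  have hdB : ∀ N : ℕ, Set.PairwiseDisjoint ↑(range N) (fun j => Ico (mid j) (hi j)) := by
    intro N j _ k _ hjk
    apply Finset.disjoint_left.2
    intro i hiA hiB
    simp only [Finset.mem_Ico, hmid, hhi] at hiA hiB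
    rcases Nat.lt_or_ge j k with h | h
    · have := hmono j k h; omega
    · have hkj : k < j := by omega
      have := hmono k j hkj; omega
  have hbound : ∀ N : ℕ, ∑ j ∈ range N,
      (∑ i ∈ Finset.Icc (2 * (j + 1) * n - (n + l)) (2 * (j + 1) * n + (n + l)), c i)
        ≤ 2 * S := by
    intro N
    have hA : ∑ j ∈ range N, ∑ i ∈ Ico (lo j) (mid j), c i ≤ S := by
      rw [← Finset.sum_biUnion (hdA N)]
      apply sum_le_tsum_shift c hc0 hc m
      intro i hi'
      rcases Finset.mem_biUnion.1 hi' with ⟨j, _, hj⟩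
      simp only [Finset.mem_Ico, hlo, hmid] at hj
      omega
    have hB : ∑ j ∈ range N, ∑ i ∈ Ico (mid j) (hi j), c i ≤ S := by
      rw [← Finset.sum_biUnion (hdB N)]
      apply sum_le_tsum_shift c hc0 hc m
      intro i hi'
      rcases Finset.mem_biUnion.1 hi' with ⟨j, _, hj⟩
      simp only [Finset.mem_Ico, hmid, hhi] at hj
      omega
    calc ∑ j ∈ range N,
        (∑ i ∈ Finset.Icc (2 * (j + 1) * n - (n + l)) (2 * (j + 1) * n + (n + l)), c i)
        = ∑ j ∈ range N, ((∑ i ∈ Ico (lo j) (mid j), c i) + ∑ i ∈ Ico (mid j) (hi j), c i) :=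
          Finset.sum_congr rfl fun j _ => hsplit j
      _ = (∑ j ∈ range N, ∑ i ∈ Ico (lo j) (mid j), c i)
            + ∑ j ∈ range N, ∑ i ∈ Ico (mid j) (hi j), c i := Finset.sum_add_distrib
      _ ≤ S + S := add_le_add hA hB
      _ = 2 * S := by ring
  have h2 : (∑' j : ℕ, ∑ i ∈ Finset.Icc (2 * (j + 1) * n - (n + l)) (2 * (j + 1) * n + (n + l)),
      c i) ≤ 2 * S :=
    Real.tsum_le_of_sum_range_le (fun j => Finset.sum_nonneg fun i _ => hc0 i) hbound
  linarith
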